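/- Kneading is a bijection on the set of finite sequences of positive integers: the map that removes the rightmost entry, pinches both ends of the remainder, and prepends the removed entry on the left is a two-sided inverse of kneading. -/

import Mathlib

/-- The continuant of a finite sequence of integers. -/
def cont : List ℤ → ℤ
  | [] => 1
  | [q] => q
  | q :: r :: t => q * cont (r :: t) + cont t

/-- The continuant of the sequence with first and last entries removed,
with the convention that it is `0` for sequences of length `≤ 1`. -/
def contMid : List ℤ → ℤ
  | [] => 0
  | [_] => 0
  | _ :: t => cont t.dropLast

/-- The alternant of a finite sequence of integers. -/
def alternant (l : List ℤ) : ℤ := cont l - contMid l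

/-- Pinch the left end of a sequence. -/
def pinchL : List ℤ → List ℤ
  | [] => []
  | [x] => if x = 1 then [x] else [1, x - 1]
  | x :: y :: t => if x = 1 then (y + 1) :: t else 1 :: (x - 1) :: y :: t

/-- Pinch the right end of a sequence. -/
def pinchR (l : List ℤ) : List ℤ := (pinchL l.reverse).reverse

/-- Knead a sequence: remove the leftmost entry, pinch both ends of the
remainder, and append the removed entry on the right. -/
def knead : List ℤ → List ℤ
  | [] => []
  | x :: t => pinchR (pinchL t) ++ [x]

/-- The inverse kneading operation: remove the rightmost entry, pinch both ends
of the remainder, and prepend the removed entry on the left. -/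
def unknead (l : List ℤ) : List ℤ :=
  match l.getLast? with
  | none => []
  | some x => x :: pinchL (pinchR l.dropLast)

lemma pinchL_pos : ∀ {l : List ℤ}, (∀ x ∈ l, 0 < x) → ∀ x ∈ pinchL l, 0 < x
  | [], _ => by simp [pinchL]
  | [x], h => by
    have hx := h x (by simp)
    by_cases hx1 : x = 1 <;> simp [pinchL, hx1] <;> omega
  | x :: y :: t, h => by
    have hx := h x (by simp)
    have hy := h y (by simp)
    have ht : ∀ z ∈ t, 0 < z := fun z hz => h z (by simp [hz])
    by_cases hx1 : x = 1 <;> simp [pinchL, hx1]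
    · exact ⟨by omega, ht⟩
    · exact ⟨by omega, hy, ht⟩

lemma pinchL_pinchL : ∀ {l : List ℤ}, (∀ x ∈ l, 0 < x) → pinchL (pinchL l) = l
  | [], _ => rfl
  | [x], h => by
    by_cases hx1 : x = 1 <;> simp [pinchL, hx1]
  | x :: y :: t, h => by
    have hy := h y (by simp)
    by_cases hx1 : x = 1
    · cases t with
      | nil => simp [pinchL, hx1]; omega
      | cons z t' => simp [pinchL, hx1]; omega
    · simp [pinchL, hx1]

lemma pinchR_pos {l : List ℤ} (h : ∀ x ∈ l, 0 < x) : ∀ x ∈ pinchR l, 0 < x := by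
  intro x hx
  rw [pinchR, List.mem_reverse] at hx
  exact pinchL_pos (fun z hz => h z (List.mem_reverse.mp hz)) x hx

lemma pinchR_pinchR {l : List ℤ} (h : ∀ x ∈ l, 0 < x) : pinchR (pinchR l) = l := by
  rw [pinchR, pinchR, List.reverse_reverse,
    pinchL_pinchL (fun z hz => h z (List.mem_reverse.mp hz)), List.reverse_reverse]

theorem unknead_is_inverse (l : List ℤ) (hpos : ∀ x ∈ l, 0 < x) :
    unknead (knead l) = l ∧ knead (unknead l) = l := by
  constructor
  · cases l with
    | nil => rfl
    | cons x t =>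
      have ht : ∀ z ∈ t, 0 < z := fun z hz => hpos z (by simp [hz])
      have h1 : ∀ z ∈ pinchL t, 0 < z := pinchL_pos ht
      rw [knead, unknead]
      rw [List.getLast?_concat, List.dropLast_concat]
      rw [pinchR_pinchR h1, pinchL_pinchL ht]
  · cases hl : l.getLast? with
    | none =>
      have : l = [] := by
        cases l with
        | nil => rfl
        | cons a t => simp [List.getLast?_eq_getLast] at hl
      subst this; rfl
    | some x =>
      have hne : l ≠ [] := by rintro rfl; simp at hl
      have hd : ∀ z ∈ l.dropLast, 0 < z := fun z hz =>
        hpos z (List.dropLast_sublist l |>.mem hz)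
      have h1 : ∀ z ∈ pinchR l.dropLast, 0 < z := pinchR_pos hd
      rw [unknead, hl, knead, pinchL_pinchL h1, pinchR_pinchR hd]
      rw [List.getLast?_eq_getLast (l := l) hne, Option.some.injEq] at hl
      rw [← hl, List.dropLast_append_getLast hne]
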